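/- Let H be a separable complex Hilbert space, let P and Q be bounded idempotent operators on H, and let U be a unitary operator on H. Then the following statements are equivalent: (i) U P U* = Q; (ii) U P_{R(P)} U* = P_{R(Q)} and U P_{N(P)} U* = P_{N(Q)}; (iii) U (P_{R(P)} - P_{N(P)}) U* = P_{R(Q)} - P_{N(Q)} and U (P - P*) U* = Q - Q*. -/

import Mathlib

open ContinuousLinearMap
open scoped InnerProductSpace

set_option linter.unusedSectionVars false

variable {H : Type*} [NormedAddCommGroup H] [InnerProductSpace ℂ H]
  [CompleteSpace H] [TopologicalSpace.SeparableSpace H]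

/-- The absolute value `|A| = (A*A)^(1/2)` of a bounded operator. -/
noncomputable def absOp (A : H →L[ℂ] H) : H →L[ℂ] H := CFC.sqrt (star A * A)

/-- A symmetry is a self-adjoint unitary: `J = J* = J⁻¹`. -/
def IsSymmetry (J : H →L[ℂ] H) : Prop := IsSelfAdjoint J ∧ J * J = 1


/-- `Q` is the orthogonal projection onto the (closed) subspace `M`. -/
def IsOrthoProjOnto (Q : H →L[ℂ] H) (M : Submodule ℂ H) : Prop :=
  IsSelfAdjoint Q ∧ Q * Q = Q ∧ LinearMap.range (Q : H →ₗ[ℂ] H) = M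

lemma aux_fix (E : H →L[ℂ] H) (hE : E * E = E) {x : H} (hx : x ∈ LinearMap.range (E : H →ₗ[ℂ] H)) :
    E x = x := by
  obtain ⟨y, rfl⟩ := hx
  calc E (E y) = (E * E) y := rfl
  _ = E y := by rw [hE]

lemma aux_kill (R : H →L[ℂ] H) (hsa : IsSelfAdjoint R) {z : H}
    (hz : z ∈ (LinearMap.range (R : H →ₗ[ℂ] H))ᗮ) : R z = 0 := by
  have hadj : ContinuousLinearMap.adjoint R = R := by
    rw [← star_eq_adjoint, hsa.star_eq]
  have h1 : ⟪R z, R z⟫_ℂ = (0 : ℂ) := by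
    calc ⟪R z, R z⟫_ℂ = ⟪ContinuousLinearMap.adjoint R (R z), z⟫_ℂ :=
          (ContinuousLinearMap.adjoint_inner_left R z (R z)).symm
    _ = ⟪R (R z), z⟫_ℂ := by rw [hadj]
    _ = 0 := hz (R (R z)) (LinearMap.mem_range_self _ _)
  rw [← inner_self_eq_zero (𝕜 := ℂ)]
  exact h1

set_option linter.unusedSectionVars false

lemma aux_idem_ext (E F : H →L[ℂ] H) (hE : E * E = E) (hF : F * F = F)
    (hr : LinearMap.range (E : H →ₗ[ℂ] H) = LinearMap.range (F : H →ₗ[ℂ] H))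
    (hk : LinearMap.ker (E : H →ₗ[ℂ] H) = LinearMap.ker (F : H →ₗ[ℂ] H)) :
    E = F := by
  ext x
  have h1 : E (F x) = F x := aux_fix E hE (hr ▸ LinearMap.mem_range_self _ _)
  have h2 : x - F x ∈ LinearMap.ker (E : H →ₗ[ℂ] H) := by
    rw [hk, LinearMap.mem_ker, map_sub]
    have : F (F x) = F x := by
      calc F (F x) = (F * F) x := rfl
      _ = F x := by rw [hF]
    rw [ContinuousLinearMap.coe_coe, this, sub_self]
  have h3 : E x - E (F x) = 0 := by
    rw [← map_sub]; exact h2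
  have := sub_eq_zero.mp h3
  rw [this, h1]

lemma aux_sa_ext (E F : H →L[ℂ] H) (hEsa : IsSelfAdjoint E) (hFsa : IsSelfAdjoint F)
    (hE : E * E = E) (hF : F * F = F)
    (hr : LinearMap.range (E : H →ₗ[ℂ] H) = LinearMap.range (F : H →ₗ[ℂ] H)) : E = F := by
  have hEF : E * F = F := by
    ext x
    exact aux_fix E hE (hr ▸ LinearMap.mem_range_self _ _)
  have hFE : F * E = E := by
    ext x
    exact aux_fix F hF (hr ▸ LinearMap.mem_range_self _ _)
  calc E = star E := hEsa.star_eq.symm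
  _ = star (F * E) := by rw [hFE]
  _ = star E * star F := by rw [star_mul]
  _ = E * F := by rw [hEsa.star_eq, hFsa.star_eq]
  _ = F := hEF

lemma aux_range_conj (U X : H →L[ℂ] H) (hU : U ∈ unitary (H →L[ℂ] H)) :
    LinearMap.range ((U * X * star U : H →L[ℂ] H) : H →ₗ[ℂ] H) =
      (LinearMap.range (X : H →ₗ[ℂ] H)).map (U : H →ₗ[ℂ] H) := by
  have hU1 : star U * U = 1 := hU.1
  have hsu : ∀ z : H, star U (U z) = z := fun z => by
    calc star U (U z) = (star U * U) z := rfl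
    _ = z := by rw [hU1]; rfl
  ext y
  constructor
  · rintro ⟨x, rfl⟩
    exact Submodule.mem_map.mpr ⟨X (star U x), LinearMap.mem_range_self _ _, rfl⟩
  · rintro ⟨z, ⟨w, rfl⟩, rfl⟩
    exact ⟨U w, by show U (X (star U (U w))) = U (X w); rw [hsu]⟩

lemma aux_ker_conj (U X : H →L[ℂ] H) (hU : U ∈ unitary (H →L[ℂ] H)) :
    LinearMap.ker ((U * X * star U : H →L[ℂ] H) : H →ₗ[ℂ] H) =
      (LinearMap.ker (X : H →ₗ[ℂ] H)).map (U : H →ₗ[ℂ] H) := by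
  have hU1 : star U * U = 1 := hU.1
  have hU2 : U * star U = 1 := hU.2
  have hsu : ∀ z : H, star U (U z) = z := fun z => by
    calc star U (U z) = (star U * U) z := rfl
    _ = z := by rw [hU1]; rfl
  have hus : ∀ z : H, U (star U z) = z := fun z => by
    calc U (star U z) = (U * star U) z := rfl
    _ = z := by rw [hU2]; rfl
  have hinjU : ∀ z : H, U z = 0 → z = 0 := fun z hz => by
    rw [← hsu z, hz, map_zero]
  ext x
  constructor
  · intro hx
    have hx' : U (X (star U x)) = 0 := hx
    have : X (star U x) = 0 := hinjU _ hx'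
    exact Submodule.mem_map.mpr ⟨star U x, this, hus x⟩
  · rintro ⟨w, hw, rfl⟩
    show U (X (star U (U w))) = 0
    rw [hsu, show X w = 0 from hw, map_zero]

lemma aux_key (P PR PN : H →L[ℂ] H) (hP : P * P = P)
    (hPR : IsOrthoProjOnto PR (LinearMap.range (P : H →ₗ[ℂ] H)))
    (hPN : IsOrthoProjOnto PN (LinearMap.ker (P : H →ₗ[ℂ] H))) :
    (PR - PN) * (P + star P - 1) = 1 ∧ (P + star P - 1) * (PR - PN) = 1 := by
  obtain ⟨hPRsa, hPRidem, hPRrange⟩ := hPR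
  obtain ⟨hPNsa, hPNidem, hPNrange⟩ := hPN
  have key : (PR - PN) * (P + star P - 1) = 1 := by
    ext x
    -- PR (P x) = P x
    have e1 : PR (P x) = P x := by
      apply aux_fix PR hPRidem
      rw [hPRrange]; exact LinearMap.mem_range_self _ _
    -- PR (star P x - x) = 0
    have e2 : PR (star P x - x) = 0 := by
      apply aux_kill PR hPRsa
      rw [hPRrange, Submodule.mem_orthogonal]
      rintro u ⟨y, rfl⟩
      have hPy : P (P y) = P y := by
        calc P (P y) = (P * P) y := rfl
        _ = P y := by rw [hP]
      have : ⟪P y, star P x⟫_ℂ = ⟪P (P y), x⟫_ℂ := by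
        rw [star_eq_adjoint]
        exact (ContinuousLinearMap.adjoint_inner_right P (P y) x)
      rw [ContinuousLinearMap.coe_coe, inner_sub_right, this, hPy, sub_self]
    -- PN (star P x) = 0
    have e3 : PN (star P x) = 0 := by
      apply aux_kill PN hPNsa
      rw [hPNrange, Submodule.mem_orthogonal]
      intro u hu
      rw [star_eq_adjoint]
      rw [ContinuousLinearMap.adjoint_inner_right]
      rw [show P u = 0 from hu, inner_zero_left]
    -- PN (P x - x) = P x - x
    have e4 : PN (P x - x) = P x - x := by
      apply aux_fix PN hPNidem
      rw [hPNrange, LinearMap.mem_ker, map_sub]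
      have : P (P x) = P x := by
        calc P (P x) = (P * P) x := rfl
        _ = P x := by rw [hP]
      rw [ContinuousLinearMap.coe_coe, this, sub_self]
    show (PR - PN) ((P + star P - 1) x) = (1 : H →L[ℂ] H) x
    have hx : (P + star P - 1) x = P x + (star P x - x) := by
      simp [sub_add_eq_sub_sub]; abel
    have hx2 : (P + star P - 1) x = star P x + (P x - x) := by
      simp [sub_add_eq_sub_sub]; abel
    have hPRx : PR ((P + star P - 1) x) = P x := by
      rw [hx, map_add, e1, e2, add_zero]
    have hPNx : PN ((P + star P - 1) x) = P x - x := by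
      rw [hx2, map_add, e3, e4, zero_add]
    show PR ((P + star P - 1) x) - PN ((P + star P - 1) x) = x
    rw [hPRx, hPNx]
    abel
  refine ⟨key, ?_⟩
  have hsa1 : IsSelfAdjoint (PR - PN) := hPRsa.sub hPNsa
  have hsa2 : IsSelfAdjoint (P + star P - 1) := by
    rw [IsSelfAdjoint]
    simp [star_sub, star_add, add_comm]
  have h := congrArg star key
  rw [star_mul, star_one, hsa1.star_eq, hsa2.star_eq] at h
  exact h

theorem stmt_8 (P Q PR PN QR QN U : H →L[ℂ] H) (hP : P * P = P) (hQ : Q * Q = Q)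
    (hU : U ∈ unitary (H →L[ℂ] H))
    (hPR : IsOrthoProjOnto PR (LinearMap.range (P : H →ₗ[ℂ] H)))
    (hPN : IsOrthoProjOnto PN (LinearMap.ker (P : H →ₗ[ℂ] H)))
    (hQR : IsOrthoProjOnto QR (LinearMap.range (Q : H →ₗ[ℂ] H)))
    (hQN : IsOrthoProjOnto QN (LinearMap.ker (Q : H →ₗ[ℂ] H))) :
    ((U * P * star U = Q) ↔ (U * PR * star U = QR ∧ U * PN * star U = QN)) ∧
    ((U * PR * star U = QR ∧ U * PN * star U = QN) ↔
      (U * (PR - PN) * star U = QR - QN ∧ U * (P - star P) * star U = Q - star Q)) := by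
  have hU1 : star U * U = 1 := hU.1
  have hU2 : U * star U = 1 := hU.2
  have conj_idem : ∀ X : H →L[ℂ] H, X * X = X →
      (U * X * star U) * (U * X * star U) = U * X * star U := by
    intro X hX
    calc (U * X * star U) * (U * X * star U)
        = U * (X * ((star U * U) * (X * star U))) := by simp only [mul_assoc]
    _ = U * (X * (X * star U)) := by rw [hU1, one_mul]
    _ = U * ((X * X) * star U) := by rw [← mul_assoc X X]
    _ = U * (X * star U) := by rw [hX]
    _ = U * X * star U := by rw [← mul_assoc]
  have conj_sa : ∀ X : H →L[ℂ] H, IsSelfAdjoint X → IsSelfAdjoint (U * X * star U) := by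
    intro X hX
    rw [IsSelfAdjoint]
    simp only [star_mul, star_star, hX.star_eq, mul_assoc]
  have iff1 : (U * P * star U = Q) ↔ (U * PR * star U = QR ∧ U * PN * star U = QN) := by
    constructor
    · intro h
      constructor
      · apply aux_sa_ext _ _ (conj_sa PR hPR.1) hQR.1 (conj_idem PR hPR.2.1) hQR.2.1
        rw [aux_range_conj U PR hU, hPR.2.2, hQR.2.2, ← h, aux_range_conj U P hU]
      · apply aux_sa_ext _ _ (conj_sa PN hPN.1) hQN.1 (conj_idem PN hPN.2.1) hQN.2.1
        rw [aux_range_conj U PN hU, hPN.2.2, hQN.2.2, ← h, aux_ker_conj U P hU]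
    · rintro ⟨h1, h2⟩
      apply aux_idem_ext (U * P * star U) Q (conj_idem P hP) hQ
      · rw [aux_range_conj U P hU, ← hPR.2.2, ← aux_range_conj U PR hU, h1, hQR.2.2]
      · rw [aux_ker_conj U P hU, ← hPN.2.2, ← aux_range_conj U PN hU, h2, hQN.2.2]
  refine ⟨iff1, ?_, ?_⟩
  · rintro ⟨h1, h2⟩
    have hPQ : U * P * star U = Q := iff1.mpr ⟨h1, h2⟩
    have hstar : U * star P * star U = star Q := by
      rw [← hPQ]
      simp only [star_mul, star_star, mul_assoc]
    constructor
    · rw [mul_sub, sub_mul, h1, h2]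
    · rw [mul_sub, sub_mul, hPQ, hstar]
  · rintro ⟨h1, h2⟩
    have kP := aux_key P PR PN hP hPR hPN
    have kQ := aux_key Q QR QN hQ hQR hQN
    have hAP : U * (P + star P - 1) * star U = Q + star Q - 1 := by
      have e1 : (QR - QN) * (U * (P + star P - 1) * star U) = 1 := by
        rw [← h1]
        calc (U * (PR - PN) * star U) * (U * (P + star P - 1) * star U)
            = U * ((PR - PN) * ((star U * U) * ((P + star P - 1) * star U))) := by
              simp only [mul_assoc]
        _ = U * ((PR - PN) * ((P + star P - 1) * star U)) := by rw [hU1, one_mul]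
        _ = U * (((PR - PN) * (P + star P - 1)) * star U) := by rw [← mul_assoc (PR - PN)]
        _ = U * (1 * star U) := by rw [kP.1]
        _ = 1 := by rw [one_mul, hU2]
      calc U * (P + star P - 1) * star U
          = 1 * (U * (P + star P - 1) * star U) := (one_mul _).symm
      _ = ((Q + star Q - 1) * (QR - QN)) * (U * (P + star P - 1) * star U) := by rw [kQ.2]
      _ = (Q + star Q - 1) * ((QR - QN) * (U * (P + star P - 1) * star U)) := by
            rw [mul_assoc]
      _ = (Q + star Q - 1) * 1 := by rw [e1]
      _ = Q + star Q - 1 := mul_one _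
    have hsum : U * (P + star P) * star U = Q + star Q := by
      have hre : U * (P + star P - 1) * star U = U * (P + star P) * star U - 1 := by
        rw [mul_sub, sub_mul, mul_one, hU2]
      rw [hre] at hAP
      exact sub_left_inj.mp hAP
    have h2' : (2 : ℂ) • (U * P * star U) = (2 : ℂ) • Q := by
      calc (2 : ℂ) • (U * P * star U) = U * ((2 : ℂ) • P) * star U := by
            rw [mul_smul_comm, smul_mul_assoc]
      _ = U * ((P + star P) + (P - star P)) * star U := by
            rw [two_smul]; congr 1; · congr 1; abel
      _ = U * (P + star P) * star U + U * (P - star P) * star U := by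
            rw [mul_add, add_mul]
      _ = (Q + star Q) + (Q - star Q) := by rw [hsum, h2]
      _ = (2 : ℂ) • Q := by rw [two_smul]; abel
    have hPQ : U * P * star U = Q := by
      have h20 : (2 : ℂ) ≠ 0 := two_ne_zero
      exact smul_right_injective (H →L[ℂ] H) h20 h2'
    exact iff1.mp hPQ
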